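/- The norm identity for the collision factor: for unit vectors q1, q2 ∈ ℂ^n and k1, k2 in the open upper half plane with k1 ≠ k2, the vector w = f_2(k1*) (I + (f_2(k1*) - 1) q2 q2†) q1, where f_2(k) = (k - k2)/(k - k2*), has squared norm |w|² = |f_2(k1*)|² (1 + ((k2 - k2*)(k1* - k1)/|k2 - k1|²) |q2† q1|²). -/

import Mathlib

open Matrix

/-- Norm identity for the collision factor: for unit vectors `q1, q2` and
`w = f₂(k̄₁)(I + (f₂(k̄₁)-1) q2 q2†) q1`, one has
`|w|² = |f₂(k̄₁)|² (1 + ((k2-k̄2)(k̄1-k1)/|k2-k1|²)|q2† q1|²)`. -/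
theorem collision_factor_norm {n : ℕ} (k1 k2 : ℂ)
    (h1 : 0 < k1.im) (h2 : 0 < k2.im) (hne : k1 ≠ k2)
    (q1 q2 : Fin n → ℂ)
    (hq1 : dotProduct (star q1) q1 = 1) (hq2 : dotProduct (star q2) q2 = 1) :
    let f2k1s : ℂ := (starRingEnd ℂ k1 - k2) / (starRingEnd ℂ k1 - starRingEnd ℂ k2)
    let w : Fin n → ℂ := f2k1s •
      (((1 : Matrix (Fin n) (Fin n) ℂ) + (f2k1s - 1) • vecMulVec q2 (star q2)).mulVec q1)
    dotProduct (star w) w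
      = ((‖f2k1s‖ : ℂ))^2 *
        (1 + ((k2 - starRingEnd ℂ k2) * (starRingEnd ℂ k1 - k1)
          / ((‖k2 - k1‖ : ℂ))^2)
          * ((‖dotProduct (star q2) q1‖ : ℂ))^2) := by
  intro f w
  have habs : ∀ z : ℂ, ((‖z‖ : ℂ))^2 = starRingEnd ℂ z * z := fun z => by
    rw [← Complex.normSq_eq_conj_mul_self]
    norm_cast
    exact Complex.sq_norm z
  set t : ℂ := dotProduct (star q2) q1 with ht
  have h21 : dotProduct (star q1) q2 = starRingEnd ℂ t := by
    rw [ht, star_dotProduct]; rfl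
  have hwdef : w = f • (q1 + ((f - 1) * t) • q2) := by
    funext i
    show f * _ = f * _
    congr 1
    simp only [add_mulVec, one_mulVec, smul_mulVec, Pi.add_apply, Pi.smul_apply,
      smul_eq_mul, mulVec, dotProduct, vecMulVec_apply, ht]
    simp only [Matrix.add_apply, Matrix.one_apply, Matrix.smul_apply, vecMulVec_apply,
      smul_eq_mul, add_mul, Finset.sum_add_distrib, ite_mul, one_mul, zero_mul,
      Finset.sum_ite_eq, Finset.mem_univ, if_true]
    congr 1
    conv_rhs => rw [Finset.mul_sum, Finset.sum_mul]
    apply Finset.sum_congr rfl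
    intro j _
    ring
  have hdot : dotProduct (star w) w
      = (starRingEnd ℂ f * f) * (1 + (starRingEnd ℂ f * f - 1) * (starRingEnd ℂ t * t)) := by
    rw [hwdef]
    simp only [star_smul, star_add, smul_dotProduct, dotProduct_smul, add_dotProduct,
      dotProduct_add, hq1, hq2, h21, star_mul', star_sub, star_one, RCLike.star_def,
      Pi.star_apply]
    rw [← ht]
    simp only [smul_eq_mul]
    ring
  rw [hdot, habs, habs, habs]
  have hd1 : starRingEnd ℂ k1 - starRingEnd ℂ k2 ≠ 0 := by
    intro h
    exact hne (by simpa using congrArg (starRingEnd ℂ) (sub_eq_zero.mp h))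
  have hd2 : k1 - k2 ≠ 0 := sub_ne_zero.mpr hne
  have hd3 : k2 - k1 ≠ 0 := sub_ne_zero.mpr (Ne.symm hne)
  have hd4 : starRingEnd ℂ (k2 - k1) ≠ 0 := by
    simpa using fun h => hd3 (by simpa using congrArg (starRingEnd ℂ) h)
  have hd5 : starRingEnd ℂ k2 - starRingEnd ℂ k1 ≠ 0 :=
    sub_ne_zero.mpr fun h => (Ne.symm hne) ((starRingEnd ℂ).injective h)
  have key : starRingEnd ℂ f * f - 1
      = (k2 - starRingEnd ℂ k2) * (starRingEnd ℂ k1 - k1)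
        / (starRingEnd ℂ (k2 - k1) * (k2 - k1)) := by
    simp only [f, map_div₀, map_sub, Complex.conj_conj]
    rw [div_mul_div_comm, div_sub_one (by exact mul_ne_zero hd2 hd1),
      div_eq_div_iff (mul_ne_zero hd2 hd1) (mul_ne_zero hd5 hd3)]
    ring
  rw [← key]
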